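/- Suppose 0 ≤ α < n, 1 < r, s with 1/r + 1/s = 1. Then for every x ∈ ℝⁿ and all locally integrable f, g, M^{r,s}_α(f,g)(x) ≤ 6^{n−α} Σ_{t ∈ {0,1/3}ⁿ} M^{r,s,𝒟^t}_α(f,g)(x), where the sum is over the 2ⁿ shifted dyadic grids. -/

import Mathlib

open MeasureTheory ENNReal Set

noncomputable section

/-- An axis-parallel cube in `ℝⁿ` (half-open), given by its corner and side length. -/
structure Cube (n : ℕ) where
  c : Fin n → ℝ
  len : ℝ
  len_pos : 0 < len

/-- The underlying set of a cube. -/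
def Cube.set {n : ℕ} (Q : Cube n) : Set (Fin n → ℝ) :=
  Set.univ.pi fun i => Set.Ico (Q.c i) (Q.c i + Q.len)

/-- The volume `|Q| = ℓ(Q)ⁿ` of a cube. -/
def Cube.vol {n : ℕ} (Q : Cube n) : ℝ := Q.len ^ n

/-- The average `⨍_Q f` of a real function over a cube. -/
def cavg {n : ℕ} (Q : Cube n) (f : (Fin n → ℝ) → ℝ) : ℝ :=
  (Q.vol)⁻¹ * ∫ x in Q.set, f x

/-- The average `⨍_Q f` of an `ℝ≥0∞`-valued function over a cube. -/
def eavg {n : ℕ} (Q : Cube n) (f : (Fin n → ℝ) → ℝ≥0∞) : ℝ≥0∞ :=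
  (ENNReal.ofReal Q.vol)⁻¹ * ∫⁻ x in Q.set, f x

/-- The Luxemburg (Orlicz) average `‖f‖_{Φ,Q}`. -/
def orliczAvg {n : ℕ} (Φ : ℝ → ℝ) (f : (Fin n → ℝ) → ℝ) (Q : Cube n) : ℝ :=
  sInf {lam : ℝ | 0 < lam ∧ cavg Q (fun x => Φ (|f x| / lam)) ≤ 1}


/-- The bilinear fractional maximal operator over all cubes. -/
def biMax (n : ℕ) (α r s : ℝ) (f g : (Fin n → ℝ) → ℝ) (x : Fin n → ℝ) : ℝ≥0∞ :=
  ⨆ (Q : Cube n) (_ : x ∈ Q.set),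
    ENNReal.ofReal Q.vol ^ (α / n) *
      (eavg Q fun y => ENNReal.ofReal (|f y| ^ r)) ^ (1 / r) *
      (eavg Q fun y => ENNReal.ofReal (|g y| ^ s)) ^ (1 / s)

/-- The cube `2^{-k}([0,1)ⁿ + m + (-1)^k t)` of the shifted dyadic grid `𝒟^t`. -/
def shiftedCube (n : ℕ) (t : Fin n → ℝ) (k : ℤ) (m : Fin n → ℤ) : Cube n :=
  ⟨fun i => (2 : ℝ) ^ (-k) * ((m i : ℝ) + (-1 : ℝ) ^ k * t i), (2 : ℝ) ^ (-k),
    by positivity⟩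

/-- The bilinear fractional maximal operator over the shifted dyadic grid `𝒟^t`. -/
def biMaxDyadic (n : ℕ) (α r s : ℝ) (t : Fin n → ℝ) (f g : (Fin n → ℝ) → ℝ)
    (x : Fin n → ℝ) : ℝ≥0∞ :=
  ⨆ (k : ℤ) (m : Fin n → ℤ) (_ : x ∈ (shiftedCube n t k m).set),
    ENNReal.ofReal (shiftedCube n t k m).vol ^ (α / n) *
      (eavg (shiftedCube n t k m) fun y => ENNReal.ofReal (|f y| ^ r)) ^ (1 / r) *
      (eavg (shiftedCube n t k m) fun y => ENNReal.ofReal (|g y| ^ s)) ^ (1 / s)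

lemma oneDim (L a l : ℝ) (hL : 0 < L) (hl : 0 < l) (h3 : 3*l ≤ L)
    (σ : ℝ) (hσ : σ = 1 ∨ σ = -1) :
    ∃ (b : Bool) (m : ℤ),
      L * ((m:ℝ) + σ * (if b then (1/3:ℝ) else 0)) ≤ a ∧
      a + l ≤ L * ((m:ℝ) + σ * (if b then (1/3:ℝ) else 0)) + L := by
  set q : ℤ := ⌊a / L⌋ with hq
  have hfl : (q:ℝ) * L ≤ a := by
    have := Int.floor_le (a / L)
    rw [← le_div_iff₀ hL]; exact this
  have hub : a < ((q:ℝ) + 1) * L := by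
    have := Int.lt_floor_add_one (a / L)
    rw [← div_lt_iff₀ hL]; push_cast; linarith
  by_cases hcase : a + l ≤ ((q:ℝ)+1)*L
  · exact ⟨false, q, by simp; nlinarith, by simp; nlinarith⟩
  · push_neg at hcase
    rcases hσ with h1 | h1
    · refine ⟨true, q, ?_, ?_⟩ <;> simp [h1] <;> nlinarith
    · refine ⟨true, q+1, ?_, ?_⟩ <;> simp [h1] <;> push_cast <;> nlinarith

lemma scale (l : ℝ) (hl : 0 < l) : ∃ k : ℤ, 3*l ≤ (2:ℝ)^(-k) ∧ (2:ℝ)^(-k) < 6*l := by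
  refine ⟨-⌈Real.logb 2 (3*l)⌉, ?_, ?_⟩
  · rw [neg_neg, ← Real.rpow_intCast]
    calc 3*l = (2:ℝ) ^ Real.logb 2 (3*l) := (Real.rpow_logb (by norm_num) (by norm_num) (by linarith)).symm
    _ ≤ (2:ℝ) ^ ((⌈Real.logb 2 (3*l)⌉:ℝ)) :=
        Real.rpow_le_rpow_left_iff (by norm_num) |>.mpr (Int.le_ceil _)
  · rw [neg_neg, ← Real.rpow_intCast]
    have h1 : ((⌈Real.logb 2 (3*l)⌉:ℝ)) - 1 < Real.logb 2 (3*l) := by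
      have := Int.ceil_lt_add_one (Real.logb 2 (3*l)); linarith
    have h2 : (2:ℝ)^(((⌈Real.logb 2 (3*l)⌉:ℝ)) - 1) < 3*l := by
      calc (2:ℝ)^(((⌈Real.logb 2 (3*l)⌉:ℝ)) - 1) < (2:ℝ) ^ Real.logb 2 (3*l) :=
            Real.rpow_lt_rpow_left_iff (by norm_num) |>.mpr h1
      _ = 3*l := Real.rpow_logb (by norm_num) (by norm_num) (by linarith)
    have h3 := Real.rpow_add_one (x := (2:ℝ)) (by norm_num) ((⌈Real.logb 2 (3*l)⌉:ℝ) - 1)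
    rw [show (⌈Real.logb 2 (3*l)⌉:ℝ) - 1 + 1 = (⌈Real.logb 2 (3*l)⌉:ℝ) by ring] at h3
    rw [h3]; linarith

lemma neg_one_zpow_cases (k : ℤ) : ((-1:ℝ))^k = 1 ∨ ((-1:ℝ))^k = -1 := by
  rcases Int.even_or_odd k with h | h
  · left; exact h.neg_one_zpow
  · right; exact h.neg_one_zpow


lemma cover {n : ℕ} (Q : Cube n) : ∃ (τ : Fin n → Bool) (k : ℤ) (m : Fin n → ℤ),
    Q.set ⊆ (shiftedCube n (fun i => if τ i then (1/3:ℝ) else 0) k m).set ∧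
    (shiftedCube n (fun i => if τ i then (1/3:ℝ) else 0) k m).len ≤ 6 * Q.len := by
  obtain ⟨k, h3, h6⟩ := scale Q.len Q.len_pos
  have hL : (0:ℝ) < (2:ℝ)^(-k) := by positivity
  have hcoord : ∀ i : Fin n, ∃ (b : Bool) (m : ℤ),
      (2:ℝ)^(-k) * ((m:ℝ) + ((-1:ℝ))^k * (if b then (1/3:ℝ) else 0)) ≤ Q.c i ∧
      Q.c i + Q.len ≤ (2:ℝ)^(-k) * ((m:ℝ) + ((-1:ℝ))^k * (if b then (1/3:ℝ) else 0)) + (2:ℝ)^(-k) :=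
    fun i => oneDim _ (Q.c i) Q.len hL Q.len_pos h3 _ (neg_one_zpow_cases k)
  choose τ m hm1 hm2 using hcoord
  refine ⟨τ, k, m, ?_, by simpa [shiftedCube] using h6.le⟩
  intro y hy i _
  have hyi := hy i (Set.mem_univ i)
  simp only [Cube.set, Set.mem_Ico] at hyi ⊢
  simp only [shiftedCube]
  exact ⟨le_trans (hm1 i) hyi.1, lt_of_lt_of_le hyi.2 (hm2 i)⟩

lemma Cube.vol_pos {n : ℕ} (Q : Cube n) : 0 < Q.vol := pow_pos Q.len_pos n

lemma eavg_le {n : ℕ} {Q R : Cube n} (h : Q.set ⊆ R.set) (F : (Fin n → ℝ) → ℝ≥0∞) :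
    eavg Q F ≤ (ENNReal.ofReal R.vol / ENNReal.ofReal Q.vol) * eavg R F := by
  have hw0 : ENNReal.ofReal R.vol ≠ 0 := by
    simp [ENNReal.ofReal_eq_zero, not_le, R.vol_pos]
  have hwt : ENNReal.ofReal R.vol ≠ ⊤ := ENNReal.ofReal_ne_top
  unfold eavg
  rw [div_eq_mul_inv]
  calc (ENNReal.ofReal Q.vol)⁻¹ * ∫⁻ y in Q.set, F y
      ≤ (ENNReal.ofReal Q.vol)⁻¹ * ∫⁻ y in R.set, F y :=
        mul_le_mul_right (lintegral_mono_set h) _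
    _ = ENNReal.ofReal R.vol * (ENNReal.ofReal Q.vol)⁻¹ *
        ((ENNReal.ofReal R.vol)⁻¹ * ∫⁻ y in R.set, F y) := by
        rw [show ∀ a b c : ℝ≥0∞, a * b * (a⁻¹ * c) = (a * a⁻¹) * (b * c) by intros; ring,
          ENNReal.mul_inv_cancel hw0 hwt, one_mul]

lemma real_key {n : ℕ} (hn : 0 < n) {α v w : ℝ} (hα0 : 0 ≤ α) (hαn : α < n)
    (hv : 0 < v) (hw : 0 < w) (hvw : w ≤ 6^n * v) :
    v ^ (α/n) * (w/v) ≤ (6:ℝ) ^ ((n:ℝ) - α) * w ^ (α/n) := by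
  have hn' : (0:ℝ) < n := by exact_mod_cast hn
  set p := α / n with hp
  set β := 1 - p with hβdef
  have hp0 : 0 ≤ p := by positivity
  have hβ : 0 < β := by
    have hlt : p < 1 := by rw [hp, div_lt_one hn']; exact hαn
    rw [hβdef]; linarith
  have hkey : w ^ β ≤ (6:ℝ) ^ ((n:ℝ) - α) * v ^ β := by
    calc w ^ β ≤ ((6:ℝ)^n * v) ^ β := Real.rpow_le_rpow hw.le hvw hβ.le
    _ = ((6:ℝ)^n) ^ β * v ^ β := Real.mul_rpow (by positivity) hv.le
    _ = (6:ℝ) ^ ((n:ℝ) - α) * v ^ β := by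
        rw [← Real.rpow_natCast (6:ℝ) n, ← Real.rpow_mul (by norm_num)]
        congr 1
        rw [hβdef, hp]
        field_simp
  have hwsplit : w = w ^ p * w ^ β := by
    rw [← Real.rpow_add hw]
    simp [hβdef]
  have hvsplit : v = v ^ p * v ^ β := by
    rw [← Real.rpow_add hv]
    simp [hβdef]
  rw [mul_div_assoc', div_le_iff₀ hv]
  have H2 := mul_le_mul_of_nonneg_left hkey
    (by positivity : (0:ℝ) ≤ v ^ p * w ^ p)
  calc v ^ p * w = v ^ p * w ^ p * w ^ β := by rw [mul_assoc, ← hwsplit]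
    _ ≤ v ^ p * w ^ p * ((6:ℝ) ^ ((n:ℝ) - α) * v ^ β) := H2
    _ = (6:ℝ) ^ ((n:ℝ) - α) * w ^ p * (v ^ p * v ^ β) := by ring
    _ = (6:ℝ) ^ ((n:ℝ) - α) * w ^ p * v := by rw [← hvsplit]

lemma term_le {n : ℕ} (hn : 0 < n) {α r s : ℝ} (hα0 : 0 ≤ α) (hαn : α < n)
    (hr : 1 < r) (hs : 1 < s) (hrs : 1/r + 1/s = 1) {Q R : Cube n}
    (hsub : Q.set ⊆ R.set) (hvol : R.vol ≤ 6^n * Q.vol)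
    (F G : (Fin n → ℝ) → ℝ≥0∞) :
    ENNReal.ofReal Q.vol ^ (α/n) * (eavg Q F) ^ (1/r) * (eavg Q G) ^ (1/s)
      ≤ ENNReal.ofReal ((6:ℝ) ^ ((n:ℝ) - α)) *
        (ENNReal.ofReal R.vol ^ (α/n) * (eavg R F) ^ (1/r) * (eavg R G) ^ (1/s)) := by
  have hQv := Q.vol_pos
  have hRv := R.vol_pos
  set c := ENNReal.ofReal R.vol / ENNReal.ofReal Q.vol with hcdef
  have hc0 : c ≠ 0 := by
    refine (ENNReal.div_pos ?_ ENNReal.ofReal_ne_top).ne'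
    simp [ENNReal.ofReal_eq_zero, not_le, hRv]
  have hct : c ≠ ⊤ := by
    refine (ENNReal.div_lt_top ENNReal.ofReal_ne_top ?_).ne
    simp [ENNReal.ofReal_eq_zero, not_le, hQv]
  have h1r : (0:ℝ) ≤ 1/r := by positivity
  have h1s : (0:ℝ) ≤ 1/s := by positivity
  have hcc : c ^ (1/r) * c ^ (1/s) = c := by
    rw [← ENNReal.rpow_add _ _ hc0 hct, hrs, ENNReal.rpow_one]
  have hkey : ENNReal.ofReal Q.vol ^ (α/n) * c
      ≤ ENNReal.ofReal ((6:ℝ) ^ ((n:ℝ) - α)) * ENNReal.ofReal R.vol ^ (α/n) := by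
    rw [hcdef, ← ENNReal.ofReal_div_of_pos hQv, ENNReal.ofReal_rpow_of_pos hQv,
      ENNReal.ofReal_rpow_of_pos hRv, ← ENNReal.ofReal_mul (by positivity),
      ← ENNReal.ofReal_mul (by positivity)]
    exact ENNReal.ofReal_le_ofReal (real_key hn hα0 hαn hQv hRv hvol)
  calc ENNReal.ofReal Q.vol ^ (α/n) * (eavg Q F) ^ (1/r) * (eavg Q G) ^ (1/s)
      ≤ ENNReal.ofReal Q.vol ^ (α/n) * (c * eavg R F) ^ (1/r) * (c * eavg R G) ^ (1/s) :=
        mul_le_mul' (mul_le_mul' le_rfl (ENNReal.rpow_le_rpow (eavg_le hsub F) h1r))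
          (ENNReal.rpow_le_rpow (eavg_le hsub G) h1s)
    _ = (ENNReal.ofReal Q.vol ^ (α/n) * c) * ((eavg R F) ^ (1/r) * (eavg R G) ^ (1/s)) := by
        rw [ENNReal.mul_rpow_of_nonneg _ _ h1r, ENNReal.mul_rpow_of_nonneg _ _ h1s,
          show ∀ q a b A B : ℝ≥0∞, q * (a*A) * (b*B) = (q * (a*b)) * (A*B) by intros; ring, hcc]
    _ ≤ (ENNReal.ofReal ((6:ℝ) ^ ((n:ℝ) - α)) * ENNReal.ofReal R.vol ^ (α/n)) *
          ((eavg R F) ^ (1/r) * (eavg R G) ^ (1/s)) := mul_le_mul' hkey le_rfl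
    _ = ENNReal.ofReal ((6:ℝ) ^ ((n:ℝ) - α)) *
          (ENNReal.ofReal R.vol ^ (α/n) * (eavg R F) ^ (1/r) * (eavg R G) ^ (1/s)) := by ring

/-- Pointwise control of `M^{r,s}_α` by the `2ⁿ` shifted dyadic maximal operators:
`M^{r,s}_α(f,g)(x) ≤ 6^{n-α} Σ_{t ∈ {0,1/3}ⁿ} M^{r,s,𝒟ᵗ}_α(f,g)(x)`. -/
theorem biMax_le_sum_dyadic (n : ℕ) (hn : 0 < n) (α r s : ℝ)
    (hα0 : 0 ≤ α) (hαn : α < n) (hr : 1 < r) (hs : 1 < s) (hrs : 1 / r + 1 / s = 1)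
    (f g : (Fin n → ℝ) → ℝ) (hf : Measurable f) (hg : Measurable g) (x : Fin n → ℝ) :
    biMax n α r s f g x
      ≤ ENNReal.ofReal ((6 : ℝ) ^ ((n : ℝ) - α)) *
          ∑ τ : Fin n → Bool,
            biMaxDyadic n α r s (fun i => if τ i then 1/3 else 0) f g x := by
  rw [biMax]
  refine iSup_le fun Q => iSup_le fun hxQ => ?_
  obtain ⟨τ, k, m, hsub, hlen⟩ := cover Q
  set R := shiftedCube n (fun i => if τ i then (1/3:ℝ) else 0) k m with hRdef
  have hvol : R.vol ≤ 6^n * Q.vol := by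
    rw [Cube.vol, Cube.vol, ← mul_pow]
    exact pow_le_pow_left₀ R.len_pos.le hlen n
  have hTR : ENNReal.ofReal R.vol ^ (α/n) *
        (eavg R fun y => ENNReal.ofReal (|f y| ^ r)) ^ (1/r) *
        (eavg R fun y => ENNReal.ofReal (|g y| ^ s)) ^ (1/s)
      ≤ biMaxDyadic n α r s (fun i => if τ i then 1/3 else 0) f g x := by
    rw [biMaxDyadic]
    exact le_iSup_of_le k (le_iSup_of_le m (le_iSup_of_le (hsub hxQ) le_rfl))
  have hsum : biMaxDyadic n α r s (fun i => if τ i then 1/3 else 0) f g x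
      ≤ ∑ τ' : Fin n → Bool, biMaxDyadic n α r s (fun i => if τ' i then 1/3 else 0) f g x :=
    Finset.single_le_sum
      (f := fun τ' : Fin n → Bool =>
        biMaxDyadic n α r s (fun i => if τ' i then (1/3:ℝ) else 0) f g x)
      (fun i _ => zero_le) (Finset.mem_univ τ)
  calc _ ≤ ENNReal.ofReal ((6 : ℝ) ^ ((n : ℝ) - α)) *
        (ENNReal.ofReal R.vol ^ (α/n) *
          (eavg R fun y => ENNReal.ofReal (|f y| ^ r)) ^ (1/r) *
          (eavg R fun y => ENNReal.ofReal (|g y| ^ s)) ^ (1/s)) :=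
      term_le hn hα0 hαn hr hs hrs hsub hvol _ _
    _ ≤ _ := mul_le_mul_right (le_trans hTR hsum) _
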